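/- Bounded expectation of the full-unlocking estimator: let Π ⊆ [0,1] be finite, p a full-support probability vector on Π, Π* ⊆ Π nonempty, g : Π → [0,1] with g(π) ≤ g* + ε for all π ∈ Π* and g(π) ≤ ε·g* for all π ∉ Π* (for some g* ∈ [0,1], ε ≥ 0), and β > 0. Define g̃(π) = 1{π∈Π*}·( (g(π)+β)/Σ_{π'∈Π*} p(π') + β ) + 1{π∉Π*}·( g(π) + β/Σ_{π'≤π} p(π') ). Then Σ_{π∈Π} p(π) g̃(π) ≤ (1+ε) g* + ε + (2 + (Σ_{π∉Π*} p(π))/(Σ_{π∈Π*} p(π)))·β. -/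

import Mathlib

open Classical in
theorem unlock_plus_estimator_expectation_bound
    (S : Finset ℝ) (hS : ∀ π ∈ S, π ∈ Set.Icc (0:ℝ) 1)
    (p : ℝ → ℝ) (hp : ∀ π ∈ S, 0 < p π) (hsum : ∑ π ∈ S, p π = 1)
    (Pstar : Finset ℝ) (hsub : Pstar ⊆ S) (hne : Pstar.Nonempty)
    (hdown : ∀ π₁ ∈ Pstar, ∀ π₂ ∈ S, π₂ ∉ Pstar → π₁ ≤ π₂)
    (g : ℝ → ℝ) (hg : ∀ π ∈ S, g π ∈ Set.Icc (0:ℝ) 1)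
    (gs ε : ℝ) (hgs : gs ∈ Set.Icc (0:ℝ) 1) (hε : 0 ≤ ε)
    (hgin : ∀ π ∈ Pstar, g π ≤ gs + ε)
    (hgout : ∀ π ∈ S, π ∉ Pstar → g π ≤ ε * gs)
    (β : ℝ) (hβ : 0 < β)
    (gt : ℝ → ℝ)
    (hgt : ∀ π ∈ S, gt π = if π ∈ Pstar
        then (g π + β) / (∑ π' ∈ Pstar, p π') + β
        else g π + β / (∑ π' ∈ S.filter (fun π' => π' ≤ π), p π')) :
    ∑ π ∈ S, p π * gt π
      ≤ (1 + ε) * gs + ε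
        + (2 + (∑ π ∈ S.filter (fun π' => π' ∉ Pstar), p π) / (∑ π ∈ Pstar, p π)) * β := by
  classical
  set q := ∑ π' ∈ Pstar, p π' with hqdef
  have hq : 0 < q := Finset.sum_pos (fun x hx => hp x (hsub hx)) hne
  have hsdiff : S \ Pstar = S.filter (fun π' => π' ∉ Pstar) := Finset.sdiff_eq_filter S Pstar
  set r := ∑ π ∈ S.filter (fun π' => π' ∉ Pstar), p π with hrdef
  have hr0 : 0 ≤ r :=
    Finset.sum_nonneg (fun x hx => le_of_lt (hp x (Finset.mem_filter.mp hx).1))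
  have hqr : r + q = 1 := by
    rw [hrdef, ← hsdiff, hqdef]
    rw [Finset.sum_sdiff hsub, hsum]
  -- split the sum
  have hsplit : ∑ π ∈ S, p π * gt π
      = ∑ π ∈ S \ Pstar, p π * gt π + ∑ π ∈ Pstar, p π * gt π :=
    (Finset.sum_sdiff hsub).symm
  -- bound on Pstar
  have hA : ∑ π ∈ Pstar, p π * gt π ≤ q * ((gs + ε + β) / q + β) := by
    have : ∑ π ∈ Pstar, p π * gt π ≤ ∑ π ∈ Pstar, p π * ((gs + ε + β) / q + β) := by
      apply Finset.sum_le_sum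
      intro x hx
      have hxS := hsub hx
      rw [hgt x hxS, if_pos hx]
      apply mul_le_mul_of_nonneg_left _ (le_of_lt (hp x hxS))
      have hgle : (g x + β) / q ≤ (gs + ε + β) / q := by
        gcongr
        linarith [hgin x hx]
      linarith
    calc ∑ π ∈ Pstar, p π * gt π ≤ ∑ π ∈ Pstar, p π * ((gs + ε + β) / q + β) := this
      _ = q * ((gs + ε + β) / q + β) := by rw [← Finset.sum_mul]
  -- bound off Pstar
  have hB : ∑ π ∈ S \ Pstar, p π * gt π ≤ r * (ε * gs + β / q) := by
    have : ∑ π ∈ S \ Pstar, p π * gt π ≤ ∑ π ∈ S \ Pstar, p π * (ε * gs + β / q) := by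
      apply Finset.sum_le_sum
      intro x hx
      obtain ⟨hxS, hxn⟩ := Finset.mem_sdiff.mp hx
      rw [hgt x hxS, if_neg hxn]
      apply mul_le_mul_of_nonneg_left _ (le_of_lt (hp x hxS))
      have hDge : q ≤ ∑ π' ∈ S.filter (fun π' => π' ≤ x), p π' := by
        rw [hqdef]
        apply Finset.sum_le_sum_of_subset_of_nonneg
        · intro y hy
          exact Finset.mem_filter.mpr ⟨hsub hy, hdown y hy x hxS hxn⟩
        · intro y hy _
          exact le_of_lt (hp y (Finset.mem_filter.mp hy).1)
      have : β / (∑ π' ∈ S.filter (fun π' => π' ≤ x), p π') ≤ β / q :=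
        div_le_div_of_nonneg_left (le_of_lt hβ) hq hDge
      linarith [hgout x hxS hxn]
    calc ∑ π ∈ S \ Pstar, p π * gt π ≤ ∑ π ∈ S \ Pstar, p π * (ε * gs + β / q) := this
      _ = r * (ε * gs + β / q) := by rw [← Finset.sum_mul, hsdiff, hrdef]
  rw [hsplit]
  have h1 : q * ((gs + ε + β) / q + β) = gs + ε + β + q * β := by
    field_simp
  have h2 : r * (ε * gs + β / q) = r * ε * gs + r / q * β := by
    field_simp
  obtain ⟨hgs0, hgs1⟩ := hgs
  have key : r * (ε * gs + β / q) + q * ((gs + ε + β) / q + β)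
      ≤ (1 + ε) * gs + ε + (2 + r / q) * β := by
    rw [h1, h2]
    nlinarith [mul_nonneg hε hgs0, mul_nonneg hq.le hβ.le, mul_nonneg (mul_nonneg hr0 hε) hgs0]
  linarith [hA, hB]
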